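/- Let p > 0, 0 < ε < 1, M ≥ 1. Let f^{(0)} = 0 and let f^{(0)}, f^{(1)}, …, f^{(m)} be vectors of nonnegative integers in {0, 1, …, ⌊M⌋}^n with f^{(t)}_i nondecreasing in t for every fixed i (an insertion-only stream). Then every ε-flip chain in the sequence (‖f^{(0)}‖_p^p, ‖f^{(1)}‖_p^p, …, ‖f^{(m)}‖_p^p) has length at most 2 + (ln n + p·ln M)/ε. -/

import Mathlib

set_option maxHeartbeats 1000000

lemma flip_key {F : ℕ → ℝ} {c : ℝ} (hc : 0 ≤ c) :
    ∀ (l : List ℕ) (a : ℕ), List.Chain (fun x y => F x < c * F y) a l →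
      F a ≤ c ^ l.length * F (l.getLastD a) := by
  intro l
  induction l with
  | nil => intro a _; simp
  | cons b t ih =>
    intro a h
    simp only [List.Chain, List.isChain_cons_cons] at h
    have h2 := ih b h.2
    calc F a ≤ c * F b := h.1.le
      _ ≤ c * (c ^ t.length * F (t.getLastD b)) := mul_le_mul_of_nonneg_left h2 hc
      _ = c ^ (b::t).length * F ((b::t).getLastD a) := by
          rw [List.getLastD_cons, List.length_cons, pow_succ]; ring


lemma chain'_comb {S T : ℕ → ℕ → Prop} {P : ℕ → Prop}
    (himp : ∀ x y, x < y → S x y → P x → P y → T x y) :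
    ∀ {l : List ℕ}, l.Chain' (· < ·) → l.Chain' S → (∀ x ∈ l, P x) → l.Chain' T := by
  intro l
  induction l with
  | nil => intro _ _ _; exact List.isChain_nil
  | cons a l ih =>
    cases l with
    | nil => intro _ _ _; exact List.isChain_singleton _
    | cons b t =>
      intro h1 h2 hP
      simp only [List.Chain', List.isChain_cons_cons] at h1 h2 ⊢
      refine ⟨himp a b h1.1 h2.1 (hP a (List.mem_cons_self (a := a)))
        (hP b (List.mem_cons_of_mem a (List.mem_cons_self (a := b)))), ?_⟩
      exact ih h1.2 h2.2 (fun x hx => hP x (List.mem_cons_of_mem a hx))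

/-- Corollary 3.5 for `p > 0`: on an insertion-only stream of vectors of nonnegative integers
bounded by `⌊M⌋`, every `ε`-flip chain in the sequence of `F_p` moments
`t ↦ ‖f^{(t)}‖_p^p = ∑ i, (f^{(t)}_i)^p` has length at most `2 + (ln n + p·ln M)/ε`. -/
theorem stmt_3 (n m : ℕ) (p ε M : ℝ) (f : ℕ → Fin n → ℕ)
    (hp : 0 < p) (hε0 : 0 < ε) (hε1 : ε < 1) (hM : 1 ≤ M)
    (hf0 : f 0 = 0)
    (hfbd : ∀ t ≤ m, ∀ i, f t i ≤ ⌊M⌋₊)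
    (hfmono : ∀ s t, s ≤ t → t ≤ m → ∀ i, f s i ≤ f t i) :
    ∀ l : List ℕ, l.Chain' (· < ·) → (∀ x ∈ l, x ≤ m) →
      l.Chain' (fun a b =>
        ¬((1 - ε) * (∑ i, ((f b i : ℝ)) ^ p) ≤ (∑ i, ((f a i : ℝ)) ^ p) ∧
          (∑ i, ((f a i : ℝ)) ^ p) ≤ (1 + ε) * (∑ i, ((f b i : ℝ)) ^ p))) →
      (l.length : ℝ) ≤ 2 + (Real.log n + p * Real.log M) / ε := by
  set F : ℕ → ℝ := fun t => ∑ i, ((f t i : ℝ)) ^ p with hF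
  have hM0 : (0:ℝ) < M := lt_of_lt_of_le one_pos hM
  have hFnn : ∀ t, 0 ≤ F t := fun t =>
    Finset.sum_nonneg fun i _ => Real.rpow_nonneg (Nat.cast_nonneg _) p
  have hFmono : ∀ s t, s ≤ t → t ≤ m → F s ≤ F t := by
    intro s t hst htm
    apply Finset.sum_le_sum
    intro i _
    exact Real.rpow_le_rpow (Nat.cast_nonneg _) (Nat.cast_le.mpr (hfmono s t hst htm i)) hp.le
  have hFbd : ∀ t ≤ m, F t ≤ (n:ℝ) * M ^ p := by
    intro t htm
    calc F t ≤ ∑ _i : Fin n, M ^ p := by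
          apply Finset.sum_le_sum
          intro i _
          apply Real.rpow_le_rpow (Nat.cast_nonneg _) _ hp.le
          calc ((f t i : ℝ)) ≤ (⌊M⌋₊ : ℝ) := Nat.cast_le.mpr (hfbd t htm i)
            _ ≤ M := Nat.floor_le hM0.le
      _ = (n:ℝ) * M ^ p := by simp [Finset.sum_const, mul_comm]
  have hFone : ∀ t, 0 < F t → 1 ≤ F t := by
    intro t ht
    obtain ⟨i, -, hi⟩ := Finset.exists_lt_of_sum_lt (by simpa using ht :
      ∑ _i : Fin n, (0:ℝ) < F t)
    have hfi : 1 ≤ f t i := by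
      by_contra h
      push_neg at h
      interval_cases (f t i)
      simp [Real.zero_rpow hp.ne'] at hi
    calc (1:ℝ) ≤ ((f t i : ℝ)) ^ p := by
          apply Real.one_le_rpow _ hp.le
          exact_mod_cast hfi
      _ ≤ F t := Finset.single_le_sum (fun j _ => Real.rpow_nonneg (Nat.cast_nonneg _) p) (Finset.mem_univ i)
  intro l hlt hle hch
  -- trivial bound for short lists
  have hRHS : (2:ℝ) ≤ 2 + (Real.log n + p * Real.log M) / ε := by
    have h1 : 0 ≤ Real.log n := by
      rcases Nat.eq_zero_or_pos n with h | h
      · simp [h]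
      · exact Real.log_nonneg (by exact_mod_cast h)
    have h2 : 0 ≤ Real.log M := Real.log_nonneg hM
    have : 0 ≤ (Real.log n + p * Real.log M) / ε :=
      div_nonneg (by positivity) hε0.le
    linarith
  match l with
  | [] => simp only [List.length_nil, Nat.cast_zero]; linarith
  | [a] =>
      simp only [List.length_singleton, Nat.cast_one]
      linarith
  | a :: b :: t =>
    -- build chain for relation F x < (1-ε) * F y
    have hεr : (0:ℝ) < 1 - ε := by linarith
    have hch2 : (a :: b :: t).Chain' (fun x y => F x < (1 - ε) * F y) := by
      refine chain'_comb (P := fun x => x ≤ m) ?_ hlt hch hle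
      intro x y hxy hS hxm hym
      have hmon : F x ≤ F y := hFmono x y hxy.le hym
      have hB : F x ≤ (1 + ε) * F y := by nlinarith [hFnn y]
      by_contra hcon
      push_neg at hcon
      exact hS ⟨hcon, hB⟩
    have hab : F a < (1 - ε) * F b := (List.isChain_cons_cons.mp hch2).1
    have hFb1 : 1 ≤ F b := hFone b (by nlinarith [hFnn a])
    have hchain : List.Chain (fun x y => F x < (1 - ε) * F y) b t :=
      (List.chain_cons.mp (hch2 : List.Chain _ a (b :: t))).2
    have hkey := flip_key hεr.le t b hchain
    set z := t.getLastD b with hz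
    have hzmem : z ∈ b :: t := List.getLastD_mem_cons
    have hzm : z ≤ m := hle z (List.mem_cons_of_mem a hzmem)
    have hFz : F z ≤ (n:ℝ) * M ^ p := hFbd z hzm
    have hn0 : 0 < n := by
      have hne : (Finset.univ : Finset (Fin n)).Nonempty := by
        by_contra h
        rw [Finset.not_nonempty_iff_eq_empty] at h
        simp only [hF, h, Finset.sum_empty] at hFb1
        linarith
      exact hne.choose.pos
    have hC : (1:ℝ) ≤ (1 - ε) ^ t.length * ((n:ℝ) * M ^ p) := by
      have hpow : (0:ℝ) < (1 - ε) ^ t.length := pow_pos hεr _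
      nlinarith [hkey]
    -- take logs
    have hCpos : (0:ℝ) < (n:ℝ) * M ^ p := by positivity
    have hlog : 0 ≤ (t.length : ℝ) * Real.log (1 - ε) + Real.log ((n:ℝ) * M ^ p) := by
      have := Real.log_le_log (by norm_num) hC
      rwa [Real.log_one, Real.log_mul (by positivity) hCpos.ne', Real.log_pow] at this
    have hlogC : Real.log ((n:ℝ) * M ^ p) = Real.log n + p * Real.log M := by
      rw [Real.log_mul (by positivity) (by positivity), Real.log_rpow hM0]
    have hlε : Real.log (1 - ε) ≤ -ε := by
      have h1 : 1 - ε ≤ Real.exp (-ε) := by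
        have := Real.add_one_le_exp (-ε)
        linarith
      calc Real.log (1 - ε) ≤ Real.log (Real.exp (-ε)) := Real.log_le_log hεr h1
        _ = -ε := Real.log_exp _
    have hmain : (t.length : ℝ) * ε ≤ Real.log n + p * Real.log M := by
      have : (t.length : ℝ) * ε ≤ -((t.length : ℝ) * Real.log (1 - ε)) := by
        have ht0 : (0:ℝ) ≤ (t.length : ℝ) := Nat.cast_nonneg _
        nlinarith
      linarith [hlog, hlogC.symm ▸ hlog, hlogC ▸ hlog]
    rw [hlogC] at hlog
    simp only [List.length_cons]
    push_cast
    have hdiv : (t.length : ℝ) ≤ (Real.log n + p * Real.log M) / ε := (le_div_iff₀ hε0).mpr hmain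
    linarith
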